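/- Let H be a nonzero real Hilbert space and let A : H → H be a continuous self-adjoint linear operator that is coercive, i.e. there exists c > 0 with ⟨A v, v⟩ ≥ c ‖v‖² for all v ∈ H. Suppose μ > 0 is such that μ ⟨A v, v⟩ ≤ ‖A v‖² for all v ∈ H. Then ⟨A v, v⟩ ≥ μ ‖v‖² for all v ∈ H. -/

import Mathlib

open scoped RealInnerProductSpace

theorem surj_aux
    {H : Type*} [NormedAddCommGroup H] [InnerProductSpace ℝ H] [CompleteSpace H]
    (A : H →L[ℝ] H)
    (c : ℝ) (hc : 0 < c) (hcoer : ∀ v : H, c * ‖v‖ ^ 2 ≤ ⟪A v, v⟫) :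
    Function.Surjective A := by
  have hbb : ∀ v : H, c * ‖v‖ ≤ ‖A v‖ := by
    intro v
    rcases eq_or_ne v 0 with rfl | hv
    · simp
    · have hvp : 0 < ‖v‖ := norm_pos_iff.mpr hv
      have := (hcoer v).trans (real_inner_le_norm (A v) v)
      rw [sq] at this
      nlinarith
  have hanti : AntilipschitzWith (⟨c, hc.le⟩ : NNReal)⁻¹ A := by
    refine ContinuousLinearMap.antilipschitz_of_bound A ?_
    intro x
    have := hbb x
    show ‖x‖ ≤ c⁻¹ * ‖A x‖
    rw [le_inv_mul_iff₀ hc]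
    exact this
  have hclosed : IsClosed ((LinearMap.range (A : H →ₗ[ℝ] H) : Submodule ℝ H) : Set H) := by
    rw [LinearMap.coe_range]
    exact hanti.isClosed_range A.uniformContinuous
  haveI := hclosed.completeSpace_coe
  have hrange : LinearMap.range (A : H →ₗ[ℝ] H) = ⊤ := by
    rw [← (LinearMap.range (A : H →ₗ[ℝ] H)).orthogonal_orthogonal, Submodule.eq_top_iff']
    intro v w hw
    have hAw : ⟪A w, w⟫ = 0 := hw (A w) ⟨w, rfl⟩
    have : w = 0 := by
      have h1 := hcoer w
      rw [hAw] at h1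
      have h2 : ‖w‖ ^ 2 ≤ 0 := by
        by_contra hp
        push_neg at hp
        nlinarith [mul_pos hc hp]
      have h3 := le_antisymm h2 (sq_nonneg _)
      rw [pow_eq_zero_iff two_ne_zero, norm_eq_zero] at h3
      exact h3
    simp [this]
  intro v
  exact (LinearMap.range_eq_top.mp hrange) v

/-- If `A` is a continuous self-adjoint coercive operator on a nonzero real
Hilbert space and `μ > 0` satisfies `μ ⟨A v, v⟩ ≤ ‖A v‖²` for all `v`, then
`⟨A v, v⟩ ≥ μ ‖v‖²` for all `v`. -/
theorem coercivity_of_rayleigh_bound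
    {H : Type*} [NormedAddCommGroup H] [InnerProductSpace ℝ H] [CompleteSpace H] [Nontrivial H]
    (A : H →L[ℝ] H)
    (hsa : ∀ u v : H, ⟪A u, v⟫ = ⟪u, A v⟫)
    (c : ℝ) (hc : 0 < c) (hcoer : ∀ v : H, c * ‖v‖ ^ 2 ≤ ⟪A v, v⟫)
    (μ : ℝ) (hμ : 0 < μ) (h : ∀ v : H, μ * ⟪A v, v⟫ ≤ ‖A v‖ ^ 2) :
    ∀ v : H, μ * ‖v‖ ^ 2 ≤ ⟪A v, v⟫ := by
  intro v
  rcases eq_or_ne v 0 with rfl | hv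
  · simp
  obtain ⟨w, hw⟩ := surj_aux A c hc hcoer v
  have hvp : (0:ℝ) < ‖v‖ ^ 2 := pow_pos (norm_pos_iff.mpr hv) 2
  have hP : 0 < ⟪A v, v⟫ := lt_of_lt_of_le (mul_pos hc hvp) (hcoer v)
  set P : ℝ := ⟪A v, v⟫ with hPdef
  set Q : ℝ := ⟪A w, w⟫ with hQdef
  have hR : ⟪A w, v⟫ = ‖v‖ ^ 2 := by
    rw [hw, real_inner_self_eq_norm_sq]
  have hsym : ⟪A v, w⟫ = ⟪A w, v⟫ := by
    rw [hsa v w, real_inner_comm]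
  -- Cauchy-Schwarz for the form ⟨A·,·⟩
  have hCS : ⟪A w, v⟫ ^ 2 ≤ Q * P := by
    set t : ℝ := ⟪A w, v⟫ / P with ht
    have hpos : (0:ℝ) ≤ ⟪A (w - t • v), w - t • v⟫ := by
      have := hcoer (w - t • v)
      nlinarith [sq_nonneg ‖w - t • v‖]
    have hexp : ⟪A (w - t • v), w - t • v⟫ = Q - 2 * t * ⟪A w, v⟫ + t ^ 2 * P := by
      simp only [map_sub, map_smul, inner_sub_left, inner_sub_right,
        real_inner_smul_left, real_inner_smul_right, ContinuousLinearMap.coe_smul',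
        Pi.smul_apply, smul_eq_mul]
      rw [hsym]
      ring
    rw [hexp] at hpos
    have htP : t * P = ⟪A w, v⟫ := div_mul_cancel₀ _ hP.ne'
    have e : (Q - 2 * t * ⟪A w, v⟫ + t ^ 2 * P) * P
        = Q * P - 2 * (t * P) * ⟪A w, v⟫ + (t * P) ^ 2 := by ring
    rw [htP] at e
    have := mul_nonneg hpos hP.le
    rw [e] at this
    nlinarith
  have hQle : μ * Q ≤ ‖v‖ ^ 2 := by
    have hh := h w
    rw [hw] at hh
    rw [hQdef, hw]
    exact hh
  rw [hR] at hCS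
  nlinarith [mul_le_mul_of_nonneg_left hCS hμ.le,
    mul_le_mul_of_nonneg_right hQle hP.le, hvp, hP]
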